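/- Let λ and μ be partitions in the m×k rectangle with λ_i ≤ (μ^∨)_i for all i, and set θ = μ^∨/λ. Then the set ∪X_θ = {u ∈ ℂ^n : u ∈ V for some V ∈ X_θ} is a ℂ-linear subspace of ℂ^n of dimension m + c(θ). -/

import Mathlib

/-- The south-east corners of a finite set of boxes: boxes `(i,j)` such that
neither `(i+1,j)` nor `(i,j+1)` belongs to the set. -/
def seCorners (θ : Finset (ℤ × ℤ)) : Finset (ℤ × ℤ) :=
  θ.filter fun b => (b.1 + 1, b.2) ∉ θ ∧ (b.1, b.2 + 1) ∉ θ

/-- `c(θ)`: the number of nonempty columns of `θ`. -/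
def colCount (θ : Finset (ℤ × ℤ)) : ℕ := (θ.image Prod.snd).card

/-- `χ(φ,p) = 1` if `p ≤ c(φ)` and `0` otherwise. -/
def chi (φ : Finset (ℤ × ℤ)) (p : ℤ) : ℤ := if p ≤ (colCount φ : ℤ) then 1 else 0

/-- `A(θ,p) = Σ_S (-1)^{|S|} χ(θ∖S, p)`, the sum over subsets `S` of the set of
south-east corners of `θ`. -/
def Acoef (θ : Finset (ℤ × ℤ)) (p : ℤ) : ℤ :=
  ∑ S ∈ (seCorners θ).powerset, (-1) ^ S.card * chi (θ \ S) p

/-- A partition in the `m × k` rectangle: a weakly decreasing sequence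
`λ_1 ≥ … ≥ λ_m ≥ 0` of integers with `λ_1 ≤ k` (indexed by `1,…,m`). -/
def IsRectPartition (m k : ℕ) (lam : ℤ → ℤ) : Prop :=
  (∀ i j : ℤ, 1 ≤ i → i ≤ j → j ≤ (m : ℤ) → lam j ≤ lam i) ∧
  (∀ i : ℤ, 1 ≤ i → i ≤ (m : ℤ) → 0 ≤ lam i) ∧ lam 1 ≤ (k : ℤ)

/-- The Young diagram `{(i,j) : 1 ≤ i ≤ m, 1 ≤ j ≤ λ_i}` of a partition in the
`m × k` rectangle. -/
noncomputable def youngD (m k : ℕ) (lam : ℤ → ℤ) : Finset (ℤ × ℤ) :=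
  (Finset.Icc (1 : ℤ) (m : ℤ) ×ˢ Finset.Icc (1 : ℤ) (k : ℤ)).filter fun b => b.2 ≤ lam b.1

/-- `θ` is a skew diagram in the `m × k` rectangle: `θ = ν/λ` for partitions
`λ ⊆ ν` in the `m × k` rectangle. -/
def IsSkewDiagram (m k : ℕ) (θ : Finset (ℤ × ℤ)) : Prop :=
  ∃ lam nu : ℤ → ℤ, IsRectPartition m k lam ∧ IsRectPartition m k nu ∧
    (∀ i : ℤ, 1 ≤ i → i ≤ (m : ℤ) → lam i ≤ nu i) ∧
    θ = youngD m k nu \ youngD m k lam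

/-- A horizontal strip contains at most one box in each column. -/
def IsHorizontalStrip (θ : Finset (ℤ × ℤ)) : Prop :=
  ∀ b ∈ θ, ∀ b' ∈ θ, b.2 = b'.2 → b.1 = b'.1

/-- The dual partition `μ^∨ = (k - μ_m, …, k - μ_1)`, i.e. `(μ^∨)_i = k - μ_{m+1-i}`. -/
def dualPart (m k : ℕ) (mu : ℤ → ℤ) : ℤ → ℤ := fun i => (k : ℤ) - mu ((m : ℤ) + 1 - i)

/-- `E_a = span(e_1, …, e_a)` inside `ℂ^{m+k}` (0-indexed basis `Pi.single`). -/
noncomputable def stdE (m k : ℕ) (a : ℤ) : Submodule ℂ (Fin (m + k) → ℂ) :=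
  Submodule.span ℂ {v | ∃ j : Fin (m + k), ((j : ℕ) : ℤ) + 1 ≤ a ∧ v = Pi.single j 1}

/-- `E^op_a = span(e_{n+1-a}, …, e_n)` inside `ℂ^{m+k}`, where `n = m + k`. -/
noncomputable def stdEop (m k : ℕ) (a : ℤ) : Submodule ℂ (Fin (m + k) → ℂ) :=
  Submodule.span ℂ
    {v | ∃ j : Fin (m + k), ((m + k : ℕ) : ℤ) - a ≤ ((j : ℕ) : ℤ) ∧ v = Pi.single j 1}

/-- `V` belongs to the Richardson variety `X_θ` for `θ = μ^∨/λ`: `V` is an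
`m`-dimensional subspace of `ℂ^n` with `dim(V ∩ E_{k+i-λ_i}) ≥ i` and
`dim(V ∩ E^op_{k+i-μ_i}) ≥ i` for all `1 ≤ i ≤ m`. -/
def InRichardson (m k : ℕ) (lam mu : ℤ → ℤ) (V : Submodule ℂ (Fin (m + k) → ℂ)) : Prop :=
  Module.finrank ℂ V = m ∧
  ∀ i : ℕ, 1 ≤ i → i ≤ m →
    i ≤ Module.finrank ℂ ↥(V ⊓ stdE m k ((k : ℤ) + (i : ℤ) - lam (i : ℤ))) ∧
    i ≤ Module.finrank ℂ ↥(V ⊓ stdEop m k ((k : ℤ) + (i : ℤ) - mu (i : ℤ)))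

/-! ### Auxiliary infrastructure -/

open Module Submodule

/-- The coordinate subspace of vectors supported on `s`. -/
noncomputable def suppSub (n : ℕ) (s : Set (Fin n)) : Submodule ℂ (Fin n → ℂ) where
  carrier := {u | ∀ j ∉ s, u j = 0}
  add_mem' := by intro a b ha hb j hj; simp [ha j hj, hb j hj]
  zero_mem' := by intro j hj; rfl
  smul_mem' := by intro c a ha j hj; simp [ha j hj]

lemma mem_suppSub {n : ℕ} {s : Set (Fin n)} {u : Fin n → ℂ} :
    u ∈ suppSub n s ↔ ∀ j ∉ s, u j = 0 := Iff.rfl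

lemma suppSub_mono {n : ℕ} {s t : Set (Fin n)} (h : s ⊆ t) : suppSub n s ≤ suppSub n t :=
  fun _ hu j hj => hu j (fun hs => hj (h hs))

lemma suppSub_eq_span {n : ℕ} (s : Set (Fin n)) :
    suppSub n s = Submodule.span ℂ {v | ∃ j ∈ s, v = Pi.single j 1} := by
  apply le_antisymm
  · intro u hu
    have : u = ∑ j : Fin n, u j • (Pi.single j 1 : Fin n → ℂ) := by
      ext j'; simp [Pi.single_apply, Finset.sum_apply]
    rw [this]
    apply Submodule.sum_mem
    intro j _
    by_cases hj : j ∈ s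
    · exact Submodule.smul_mem _ _ (Submodule.subset_span ⟨j, hj, rfl⟩)
    · simp [hu j hj]
  · rw [Submodule.span_le]
    rintro v ⟨j, hj, rfl⟩
    intro j' hj'
    have : j ≠ j' := fun h => hj' (h ▸ hj)
    simp [Pi.single_apply, this.symm]

lemma finrank_suppSub {n : ℕ} (s : Finset (Fin n)) :
    Module.finrank ℂ (suppSub n (s : Set (Fin n))) = s.card := by
  classical
  let F : (suppSub n (s : Set (Fin n))) →ₗ[ℂ] (s → ℂ) :=
    { toFun := fun u j => (u : Fin n → ℂ) j
      map_add' := fun a b => rfl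
      map_smul' := fun c a => rfl }
  have hbij : Function.Bijective F := by
    constructor
    · intro a b hab
      ext j
      by_cases hj : j ∈ (s : Set (Fin n))
      · exact congrFun hab ⟨j, hj⟩
      · rw [a.2 j hj, b.2 j hj]
    · intro f
      refine ⟨⟨fun j => if h : j ∈ s then f ⟨j, h⟩ else 0, ?_⟩, ?_⟩
      · intro j hj
        simp only [Finset.mem_coe] at hj
        simp [hj]
      · ext j
        have := j.2
        simp [F, this]
  have := LinearEquiv.finrank_eq (LinearEquiv.ofBijective F hbij)
  simp only [this]
  simp [Module.finrank_pi]

lemma stdE_eq (m k : ℕ) (a : ℤ) :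
    stdE m k a = suppSub (m+k) {j | ((j : ℕ) : ℤ) + 1 ≤ a} := by
  rw [suppSub_eq_span, stdE]; congr 1

lemma stdEop_eq (m k : ℕ) (a : ℤ) :
    stdEop m k a = suppSub (m+k) {j | ((m + k : ℕ) : ℤ) - a ≤ ((j : ℕ) : ℤ)} := by
  rw [suppSub_eq_span, stdEop]; congr 1

lemma li_of_disjoint_supp {n : ℕ} {ι : Type*} (v : ι → (Fin n → ℂ)) (S : ι → Set (Fin n))
    (hs : ∀ t j, v t j ≠ 0 → j ∈ S t) (hd : Pairwise (Function.onFun Disjoint S))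
    (hnz : ∀ t, v t ≠ 0) : LinearIndependent ℂ v := by
  rw [linearIndependent_iff']
  intro s g hsum t ht
  obtain ⟨j, hj⟩ : ∃ j, v t j ≠ 0 := Function.ne_iff.mp (hnz t)
  have hvj : ∀ t' ∈ s, t' ≠ t → g t' * v t' j = 0 := by
    intro t' _ hne
    by_cases h : v t' j = 0
    · simp [h]
    · exact absurd (hs t j hj) (Set.disjoint_left.mp (hd hne) (hs t' j h))
  have := congrFun hsum j
  simp only [Finset.sum_apply, Pi.smul_apply, smul_eq_mul, Pi.zero_apply] at this
  rw [Finset.sum_eq_single t hvj (fun h => (h ht).elim)] at this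
  exact (mul_eq_zero.mp this).resolve_right hj

lemma le_of_finrank_inf {K : Type*} [Field K] {M : Type*} [AddCommGroup M] [Module K M]
    [FiniteDimensional K M] (V S : Submodule K M)
    (h : finrank K V ≤ finrank K (V ⊓ S : Submodule K M)) : V ≤ S := by
  have : V ⊓ S = V := Submodule.eq_of_le_of_finrank_le inf_le_left h
  rw [← this]; exact inf_le_right

/-! ### The interval endpoints -/

/-- `R_t = k + t - λ_t` for `t ≥ 1`, and `R_0 = 0`. -/
def Rz (k : ℕ) (lam : ℤ → ℤ) : ℕ → ℤ := fun t => if t = 0 then 0 else (k : ℤ) + t - lam t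

/-- `L_t = t + μ_{m+1-t}`. -/
def Lz (m : ℕ) (mu : ℤ → ℤ) : ℕ → ℤ := fun t => (t : ℤ) + mu ((m : ℤ) + 1 - t)

/-- `D_i = (μ^∨)_i` for `1 ≤ i ≤ m`, and `D_{m+1} = 0`. -/
def Dz (m k : ℕ) (mu : ℤ → ℤ) : ℕ → ℤ :=
  fun i => if i = m + 1 then 0 else (k : ℤ) - mu ((m : ℤ) + 1 - i)

/-- The index set `J`. -/
def Jpred (m k : ℕ) (lam mu : ℤ → ℤ) (j0 : ℤ) : Prop :=
  ∃ t ∈ Finset.range m, Lz m mu (t+1) ≤ j0 ∧ j0 ≤ Rz k lam (t+1)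

section Main

variable (m k : ℕ) (lam mu : ℤ → ℤ)

lemma richardson_le (hm : 0 < m)
    (hlam : IsRectPartition m k lam) (hmu : IsRectPartition m k mu)
    (V : Submodule ℂ (Fin (m + k) → ℂ)) (hV : InRichardson m k lam mu V) :
    V ≤ suppSub (m+k) {j | Jpred m k lam mu ((j : ℕ) + 1)} := by
  obtain ⟨hVrk, hVc⟩ := hV
  intro u hu
  rw [mem_suppSub]
  intro j hj
  simp only [Set.mem_setOf_eq] at hj
  set j0 : ℤ := ((j : ℕ) : ℤ) + 1 with hj0
  have hj01 : 1 ≤ j0 := by omega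
  have hj0n : j0 ≤ (m : ℤ) + k := by
    have := j.2
    omega
  obtain ⟨hlam_mono, hlam_nn, hlam_k⟩ := hlam
  obtain ⟨hmu_mono, hmu_nn, hmu_k⟩ := hmu
  have hm1 : (1:ℤ) ≤ (m:ℤ) := by exact_mod_cast hm
  by_cases hc1 : j0 ≤ mu m
  · -- V ⊆ E^op_{k+m-μ_m}
    have hOp := (hVc m hm le_rfl).2
    have hVle : V ≤ stdEop m k ((k:ℤ) + m - mu m) :=
      le_of_finrank_inf _ _ (by rw [hVrk]; exact hOp)
    rw [stdEop_eq] at hVle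
    have := hVle hu
    rw [mem_suppSub] at this
    apply this
    simp only [Set.mem_setOf_eq]
    push_cast
    omega
  by_cases hc2 : (k:ℤ) + m - lam m < j0
  · -- V ⊆ E_{k+m-λ_m}
    have hE := (hVc m hm le_rfl).1
    have hVle : V ≤ stdE m k ((k:ℤ) + m - lam m) :=
      le_of_finrank_inf _ _ (by rw [hVrk]; exact hE)
    rw [stdE_eq] at hVle
    have := hVle hu
    rw [mem_suppSub] at this
    apply this
    simp only [Set.mem_setOf_eq]
    omega
  push_neg at hc1 hc2
  -- middle gap: find the largest i with L_i ≤ j0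
  classical
  set P : ℕ → Prop := fun t => 1 ≤ t ∧ Lz m mu t ≤ j0 with hP
  have hP1 : P 1 := by
    refine ⟨le_rfl, ?_⟩
    have e1 : (m:ℤ) + 1 - (1:ℕ) = (m:ℤ) := by push_cast; ring
    simp only [Lz, e1]
    push_cast
    omega
  set i : ℕ := Nat.findGreatest P m with hidef
  have hi1 : 1 ≤ i := Nat.le_findGreatest hm hP1
  have him : i ≤ m := Nat.findGreatest_le m
  have hPi : P i := Nat.findGreatest_spec hm hP1
  have hRi : Rz k lam i < j0 := by
    by_contra hcon
    push_neg at hcon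
    exact hj ⟨i - 1, Finset.mem_range.mpr (by omega), by
      rw [show i - 1 + 1 = i from by omega]; exact ⟨hPi.2, hcon⟩⟩
  have him' : i < m := by
    rcases Nat.lt_or_ge i m with h | h
    · exact h
    · exfalso
      have : i = m := le_antisymm him h
      rw [this] at hRi
      simp only [Rz, if_neg (by omega : m ≠ 0)] at hRi
      omega
  have hgap : j0 < Lz m mu (i+1) := by
    have := Nat.findGreatest_is_greatest (show i < i + 1 by omega) (by omega : i + 1 ≤ m)
    by_contra hcon
    push_neg at hcon
    exact this ⟨by omega, hcon⟩
  -- rewrite the gap bound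
  set w : ℤ := (m:ℤ) - i with hw
  have e2 : (m:ℤ) + 1 - ((i+1 : ℕ) : ℤ) = w := by push_cast; ring
  simp only [Lz, e2] at hgap
  have hgap' : j0 ≤ (i:ℤ) + mu w := by push_cast at hgap; omega
  have hRi' : (k:ℤ) + i - lam i < j0 := by
    simpa only [Rz, if_neg (by omega : i ≠ 0)] using hRi
  -- the two flag conditions
  have hE := (hVc i hi1 him'.le).1
  have hOp := (hVc (m - i) (by omega) (by omega)).2
  rw [show ((m - i : ℕ) : ℤ) = w from by omega] at hOp
  set A := stdE m k ((k:ℤ) + i - lam i) with hA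
  set B := stdEop m k ((k:ℤ) + w - mu w) with hB
  -- A ⊓ B = ⊥ hence V ⊓ A and V ⊓ B intersect trivially
  have hbot : (V ⊓ A) ⊓ (V ⊓ B) = ⊥ := by
    rw [eq_bot_iff]
    rintro x ⟨⟨-, hxA⟩, ⟨-, hxB⟩⟩
    rw [hA, stdE_eq] at hxA
    rw [hB, stdEop_eq] at hxB
    have hxA' : ∀ j' : Fin (m+k), ¬ (((j' : ℕ) : ℤ) + 1 ≤ (k:ℤ) + i - lam i) → x j' = 0 :=
      fun j' h => hxA j' h
    have hxB' : ∀ j' : Fin (m+k), ¬ (((m+k : ℕ) : ℤ) - ((k:ℤ) + w - mu w) ≤ ((j' : ℕ) : ℤ))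
        → x j' = 0 := fun j' h => hxB j' h
    have : x = 0 := by
      funext j'
      by_cases hj' : ((j' : ℕ) : ℤ) + 1 ≤ (k:ℤ) + i - lam i
      · refine hxB' j' ?_
        push_cast
        omega
      · exact hxA' j' hj'
    simp [this]
  have hrk : finrank ℂ ((V ⊓ A) ⊔ (V ⊓ B) : Submodule ℂ (Fin (m+k) → ℂ))
      = finrank ℂ (V ⊓ A : Submodule ℂ (Fin (m+k) → ℂ))
        + finrank ℂ (V ⊓ B : Submodule ℂ (Fin (m+k) → ℂ)) := by
    have := Submodule.finrank_sup_add_finrank_inf_eq (V ⊓ A) (V ⊓ B)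
    rw [hbot] at this
    simpa using this
  have hVeq : (V ⊓ A) ⊔ (V ⊓ B) = V := by
    refine Submodule.eq_of_le_of_finrank_le (sup_le inf_le_left inf_le_left) ?_
    rw [hVrk, hrk]
    omega
  rw [← hVeq] at hu
  obtain ⟨a, ha, b, hb, hab⟩ := Submodule.mem_sup.mp hu
  have haj : a j = 0 := by
    have h2 := ha.2
    rw [hA, stdE_eq] at h2
    exact h2 j (by simp only [Set.mem_setOf_eq]; omega)
  have hbj : b j = 0 := by
    have h2 := hb.2
    rw [hB, stdEop_eq] at h2
    exact h2 j (by simp only [Set.mem_setOf_eq]; push_cast; omega)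
  rw [← hab]
  simp [haj, hbj]

/-- Block `t` (`0 ≤ t < m`): coordinates `j` with
`L_{t+1} ≤ j+1 ≤ R_{t+1}` and `R_t < j+1`. -/
def blockSet (m k : ℕ) (lam mu : ℤ → ℤ) (t : ℕ) : Set (Fin (m+k)) :=
  {j | Lz m mu (t+1) ≤ ((j : ℕ) : ℤ) + 1 ∧ Rz k lam t < ((j : ℕ) : ℤ) + 1 ∧
    ((j : ℕ) : ℤ) + 1 ≤ Rz k lam (t+1)}

open Classical in
/-- The part of `u` supported on block `t`. -/
noncomputable def blockVec (m k : ℕ) (lam mu : ℤ → ℤ) (u : Fin (m+k) → ℂ) (t : ℕ) :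
    Fin (m+k) → ℂ :=
  fun j => if j ∈ blockSet m k lam mu t then u j else 0

lemma hRmono (hlam : IsRectPartition m k lam) :
    ∀ s s' : ℕ, s ≤ s' → s' ≤ m → Rz k lam s ≤ Rz k lam s' := by
  obtain ⟨hmono, hnn, hk1⟩ := hlam
  intro s s' hss' hs'm
  rcases Nat.eq_or_lt_of_le hss' with rfl | hlt
  · exact le_refl _
  rcases Nat.eq_zero_or_pos s with rfl | hs
  · have e0 : Rz k lam 0 = 0 := by simp [Rz]
    rw [e0]
    simp only [Rz, if_neg (by omega : s' ≠ 0)]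
    have h1 : lam s' ≤ lam 1 := hmono 1 s' le_rfl (by exact_mod_cast Nat.one_le_iff_ne_zero.mpr (by omega)) (by exact_mod_cast hs'm)
    have h2 : (1:ℤ) ≤ (s' : ℤ) := by exact_mod_cast Nat.one_le_iff_ne_zero.mpr (by omega)
    omega
  · simp only [Rz, if_neg (by omega : s ≠ 0), if_neg (by omega : s' ≠ 0)]
    have h1 : lam s' ≤ lam s := hmono s s' (by exact_mod_cast hs) (by exact_mod_cast hss') (by exact_mod_cast hs'm)
    push_cast
    omega

lemma hLmono (hmu : IsRectPartition m k mu) :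
    ∀ s s' : ℕ, 1 ≤ s → s ≤ s' → s' ≤ m → Lz m mu s ≤ Lz m mu s' := by
  obtain ⟨hmono, hnn, hk1⟩ := hmu
  intro s s' h1 hss' hs'm
  simp only [Lz]
  have h2 : mu ((m:ℤ) + 1 - s) ≤ mu ((m:ℤ) + 1 - s') := by
    apply hmono ((m:ℤ)+1-s') ((m:ℤ)+1-s) <;> push_cast <;> omega
  push_cast
  omega

lemma mem_union_of_mem_W (hm : 0 < m)
    (hlam : IsRectPartition m k lam) (hmu : IsRectPartition m k mu)
    (hsub : ∀ i : ℤ, 1 ≤ i → i ≤ (m : ℤ) → lam i ≤ dualPart m k mu i)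
    (u : Fin (m + k) → ℂ)
    (hu : u ∈ suppSub (m+k) {j | Jpred m k lam mu ((j : ℕ) + 1)}) :
    ∃ V : Submodule ℂ (Fin (m + k) → ℂ), InRichardson m k lam mu V ∧ u ∈ V := by
  classical
  obtain ⟨hlam_mono, hlam_nn, hlam_k⟩ := hlam
  obtain ⟨hmu_mono, hmu_nn, hmu_k⟩ := hmu
  have hmk : 0 < m + k := by omega
  -- bounds on R
  have hRbound : ∀ t : ℕ, t < m → (t:ℤ) + 1 ≤ Rz k lam (t+1) ∧ Rz k lam (t+1) ≤ (k:ℤ) + t + 1 := by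
    intro t ht
    have h1 : lam (t+1 : ℕ) ≤ lam 1 := hlam_mono 1 (t+1 : ℕ) le_rfl (by push_cast; omega) (by push_cast; omega)
    have h2 : 0 ≤ lam (t+1 : ℕ) := hlam_nn (t+1 : ℕ) (by push_cast; omega) (by push_cast; omega)
    simp only [Rz, if_neg (by omega : t + 1 ≠ 0)]
    push_cast at h1 h2 ⊢
    omega
  have hRstrict : ∀ t : ℕ, t < m → Rz k lam t < Rz k lam (t+1) := by
    intro t ht
    rcases Nat.eq_zero_or_pos t with rfl | htpos
    · have := hRbound 0 ht
      simp [Rz] at this ⊢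
      omega
    · have h1 : lam ((t:ℤ)+1) ≤ lam t := hlam_mono t ((t:ℤ)+1) (by push_cast; omega) (by omega) (by push_cast; omega)
      simp only [Rz, if_neg (by omega : t ≠ 0), if_neg (by omega : t + 1 ≠ 0)]
      push_cast
      omega
  set rt : ℕ → Fin (m+k) := fun t => ⟨(Rz k lam (t+1) - 1).toNat % (m+k), Nat.mod_lt _ hmk⟩
    with hrt
  have hrtval : ∀ t : ℕ, t < m → ((rt t : ℕ) : ℤ) + 1 = Rz k lam (t+1) := by
    intro t ht
    obtain ⟨hb1, hb2⟩ := hRbound t ht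
    have h3 : (Rz k lam (t+1) - 1).toNat < m + k := by omega
    simp only [hrt]
    rw [Nat.mod_eq_of_lt h3]
    omega
  set S : ℕ → Set (Fin (m+k)) := blockSet m k lam mu with hS
  have hrtS : ∀ t : ℕ, t < m → rt t ∈ S t := by
    intro t ht
    have e1 : (m:ℤ) + 1 - ((t+1:ℕ):ℤ) = (m:ℤ) - t := by push_cast; ring
    have hd := hsub ((t:ℤ)+1) (by omega) (by push_cast; omega)
    simp only [dualPart] at hd
    have e2 : (m:ℤ) + 1 - ((t:ℤ)+1) = (m:ℤ) - t := by ring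
    rw [e2] at hd
    refine ⟨?_, ?_, ?_⟩
    · -- L_{t+1} ≤ R_{t+1}
      rw [hrtval t ht]
      simp only [Lz, e1, Rz, if_neg (by omega : t + 1 ≠ 0)]
      push_cast
      omega
    · rw [hrtval t ht]; exact hRstrict t ht
    · rw [hrtval t ht]
  set bv : ℕ → Fin (m+k) → ℂ := blockVec m k lam mu u with hbv
  set vv : ℕ → Fin (m+k) → ℂ :=
    fun t => if bv t = 0 then Pi.single (rt t) 1 else bv t with hvv
  have hbv_supp : ∀ t j, bv t j ≠ 0 → j ∈ S t := by
    intro t j h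
    simp only [hbv, blockVec] at h
    by_cases hj : j ∈ blockSet m k lam mu t
    · exact hj
    · rw [if_neg hj] at h; exact absurd rfl h
  have hbv_mem : ∀ t j, j ∈ S t → bv t j = u j := by
    intro t j h
    simp only [hbv, blockVec, if_pos (show j ∈ blockSet m k lam mu t from h)]
  have hsupp : ∀ t : ℕ, t < m → ∀ j, vv t j ≠ 0 → j ∈ S t := by
    intro t ht j h
    simp only [hvv] at h
    by_cases hz : bv t = 0
    · rw [if_pos hz] at h
      have : j = rt t := by
        by_contra hne
        rw [Pi.single_apply, if_neg hne] at h
        exact h rfl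
      rw [this]; exact hrtS t ht
    · rw [if_neg hz] at h
      exact hbv_supp t j h
  have hnz : ∀ t : ℕ, vv t ≠ 0 := by
    intro t
    simp only [hvv]
    by_cases hz : bv t = 0
    · rw [if_pos hz]
      intro hc
      have := congrFun hc (rt t)
      simp [Pi.single_apply] at this
    · rw [if_neg hz]; exact hz
  have hSdisj : ∀ t t' : ℕ, t < t' → t' < m → ∀ j, j ∈ S t → j ∈ S t' → False := by
    intro t t' htt' ht'm j hjt hjt'
    obtain ⟨-, -, h1⟩ := hjt
    obtain ⟨-, h2, -⟩ := hjt'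
    have := hRmono m k lam ⟨hlam_mono, hlam_nn, hlam_k⟩ (t+1) t' (by omega) (by omega)
    omega
  have hli : LinearIndependent ℂ (fun t : Fin m => vv t) := by
    refine li_of_disjoint_supp _ (fun t : Fin m => S t.val) ?_ ?_ ?_
    · intro t j h; exact hsupp t t.2 j h
    · intro a b hne
      rcases Nat.lt_or_ge a.val b.val with h | h
      · exact Set.disjoint_left.mpr (fun j hja hjb => hSdisj a b h b.2 j hja hjb)
      · have h' : b.val < a.val := by
          rcases Nat.eq_or_lt_of_le h with he | hl
          · exact absurd (Fin.ext he.symm) hne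
          · exact hl
        exact Set.disjoint_right.mpr (fun j hja hjb => hSdisj b a h' a.2 j hja hjb)
    · intro t; exact hnz t.val
  set V : Submodule ℂ (Fin (m+k) → ℂ) := Submodule.span ℂ (Set.range (fun t : Fin m => vv t))
    with hV
  have hVrk : finrank ℂ V = m := by
    rw [hV, finrank_span_eq_card hli, Fintype.card_fin]
  -- u is the sum of its blocks
  have husum : u = ∑ t : Fin m, bv t := by
    funext j
    rw [Finset.sum_apply]
    by_cases hex : ∃ t : Fin m, j ∈ S t.val
    · obtain ⟨t0, ht0⟩ := hex
      rw [Finset.sum_eq_single t0]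
      · exact (hbv_mem t0 j ht0).symm
      · intro t' _ hne
        by_cases hj' : j ∈ S t'.val
        · exfalso
          rcases Nat.lt_or_ge t'.val t0.val with h | h
          · exact hSdisj t' t0 h t0.2 j hj' ht0
          · have h' : t0.val < t'.val := by
              rcases Nat.eq_or_lt_of_le h with he | hl
              · exact absurd (Fin.ext he.symm) hne
              · exact hl
            exact hSdisj t0 t' h' t'.2 j ht0 hj'
        · simp only [hbv, blockVec, if_neg (show j ∉ blockSet m k lam mu t'.val from hj')]
      · intro hc; exact absurd (Finset.mem_univ t0) hc
    · push_neg at hex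
      have hz : ∀ t : Fin m, bv t.val j = 0 := by
        intro t
        by_contra hc
        exact hex t (hbv_supp t.val j hc)
      rw [Finset.sum_eq_zero (fun t _ => hz t)]
      -- u j = 0, otherwise j+1 ∈ J and j would lie in some block
      by_contra hc
      have hJ : Jpred m k lam mu (((j : ℕ) : ℤ) + 1) := by
        by_contra hJc
        exact hc ((mem_suppSub.mp hu) j hJc)
      obtain ⟨t, htm, hL, hR⟩ := hJ
      rw [Finset.mem_range] at htm
      -- minimal t* with j+1 ≤ R_{t*+1}
      have hQex : ∃ s : ℕ, ((j : ℕ) : ℤ) + 1 ≤ Rz k lam (s+1) := ⟨t, hR⟩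
      have htsspec : ((j : ℕ) : ℤ) + 1 ≤ Rz k lam (Nat.find hQex + 1) := Nat.find_spec hQex
      have htst : Nat.find hQex ≤ t := Nat.find_min' hQex hR
      have htsm : Nat.find hQex < m := Nat.lt_of_le_of_lt htst htm
      apply hex ⟨Nat.find hQex, htsm⟩
      refine ⟨?_, ?_, htsspec⟩
      · -- L_{ts+1} ≤ j+1
        calc Lz m mu (Nat.find hQex + 1) ≤ Lz m mu (t+1) :=
              hLmono m k mu ⟨hmu_mono, hmu_nn, hmu_k⟩ (Nat.find hQex + 1) (t+1)
                (Nat.le_add_left 1 _) (Nat.succ_le_succ htst) htm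
          _ ≤ _ := hL
      · -- R_{ts} < j+1
        show Rz k lam (Nat.find hQex) < ((j : ℕ) : ℤ) + 1
        rcases Nat.eq_zero_or_pos (Nat.find hQex) with he | hpos
        · rw [he]
          have hR0 : Rz k lam 0 = 0 := by simp [Rz]
          omega
        · have hmin := Nat.find_min hQex (show Nat.find hQex - 1 < Nat.find hQex by omega)
          push_neg at hmin
          rw [show Nat.find hQex - 1 + 1 = Nat.find hQex from by omega] at hmin
          exact hmin
  have huV : u ∈ V := by
    rw [husum]
    apply Submodule.sum_mem
    intro t _
    by_cases hz : bv t.val = 0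
    · rw [hz]; exact Submodule.zero_mem _
    · have : bv t.val = vv t.val := by rw [hvv]; simp [hz]
      rw [this]
      exact Submodule.subset_span ⟨t, rfl⟩
  refine ⟨V, ⟨hVrk, ?_⟩, huV⟩
  intro p hp1 hpm
  constructor
  · -- E-condition
    set incl : Fin p → Fin m := Fin.castLE hpm with hincl
    have hli2 : LinearIndependent ℂ ((fun t : Fin m => vv t) ∘ incl) :=
      hli.comp incl (Fin.castLE_injective hpm)
    have hrk2 : finrank ℂ (Submodule.span ℂ (Set.range ((fun t : Fin m => vv t) ∘ incl))) = p := by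
      rw [finrank_span_eq_card hli2, Fintype.card_fin]
    have hle1 : Submodule.span ℂ (Set.range ((fun t : Fin m => vv t) ∘ incl)) ≤ V :=
      Submodule.span_mono (Set.range_comp_subset_range _ _)
    have hle2 : Submodule.span ℂ (Set.range ((fun t : Fin m => vv t) ∘ incl))
        ≤ stdE m k ((k : ℤ) + (p : ℤ) - lam (p : ℤ)) := by
      rw [Submodule.span_le]
      rintro - ⟨s, rfl⟩
      rw [SetLike.mem_coe, stdE_eq]
      intro j hj
      simp only [Set.mem_setOf_eq] at hj
      by_contra hc
      have hjS := hsupp (incl s) (incl s).2 j hc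
      obtain ⟨-, -, h3⟩ := hjS
      have hmono := hRmono m k lam ⟨hlam_mono, hlam_nn, hlam_k⟩ ((incl s) + 1) p
        (by simp only [hincl, Fin.coe_castLE]; omega) hpm
      have hRp : Rz k lam p = (k : ℤ) + p - lam p := by
        simp only [Rz, if_neg (by omega : p ≠ 0)]
      omega
    calc p = finrank ℂ (Submodule.span ℂ (Set.range ((fun t : Fin m => vv t) ∘ incl))) :=
          hrk2.symm
      _ ≤ _ := Submodule.finrank_mono (le_inf hle1 hle2)
  · -- E^op-condition
    set incl : Fin p → Fin m := fun s => ⟨m - p + s.val, by omega⟩ with hincl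
    have hinj : Function.Injective incl := by
      intro a b hab
      have := congrArg Fin.val hab
      simp only [hincl] at this
      exact Fin.ext (by omega)
    have hli2 : LinearIndependent ℂ ((fun t : Fin m => vv t) ∘ incl) := hli.comp incl hinj
    have hrk2 : finrank ℂ (Submodule.span ℂ (Set.range ((fun t : Fin m => vv t) ∘ incl))) = p := by
      rw [finrank_span_eq_card hli2, Fintype.card_fin]
    have hle1 : Submodule.span ℂ (Set.range ((fun t : Fin m => vv t) ∘ incl)) ≤ V :=
      Submodule.span_mono (Set.range_comp_subset_range _ _)
    have hle2 : Submodule.span ℂ (Set.range ((fun t : Fin m => vv t) ∘ incl))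
        ≤ stdEop m k ((k : ℤ) + (p : ℤ) - mu (p : ℤ)) := by
      rw [Submodule.span_le]
      rintro - ⟨s, rfl⟩
      rw [SetLike.mem_coe, stdEop_eq]
      intro j hj
      simp only [Set.mem_setOf_eq] at hj
      by_contra hc
      have hjS := hsupp (incl s) (incl s).2 j hc
      obtain ⟨h1, -, -⟩ := hjS
      set t : ℕ := (incl s).val with ht
      have htge : m - p ≤ t := by simp only [ht, hincl]; omega
      have htlt : t < m := (incl s).2
      have e1 : (m:ℤ) + 1 - ((t+1:ℕ):ℤ) = (m:ℤ) - t := by push_cast; ring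
      simp only [Lz, e1] at h1
      have hmuc : mu p ≤ mu ((m:ℤ) - t) :=
        hmu_mono ((m:ℤ) - t) p (by omega) (by omega) (by exact_mod_cast hpm)
      push_cast at h1 hj ⊢
      omega
    calc p = finrank ℂ (Submodule.span ℂ (Set.range ((fun t : Fin m => vv t) ∘ incl))) :=
          hrk2.symm
      _ ≤ _ := Submodule.finrank_mono (le_inf hle1 hle2)

lemma hDmono (hmu : IsRectPartition m k mu) :
    ∀ s s' : ℕ, 1 ≤ s → s ≤ s' → s' ≤ m + 1 → Dz m k mu s' ≤ Dz m k mu s := by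
  obtain ⟨hmono, hnn, hk1⟩ := hmu
  intro s s' h1 hss' hs'm
  have hsm1 : 1 ≤ (m:ℤ) + 1 - s ∧ (m:ℤ) + 1 - s ≤ m ∨ s = m + 1 := by
    rcases Nat.eq_or_lt_of_le (le_trans hss' hs'm) with he | hl
    · right; exact he
    · left; constructor <;> push_cast <;> omega
  have hDtop : Dz m k mu (m+1) = 0 := by simp [Dz]
  rcases Nat.eq_or_lt_of_le hs'm with he | hl
  · -- s' = m+1 : Dz s' = 0
    rw [he, hDtop]
    rcases hsm1 with ⟨hb1, hb2⟩ | he2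
    · have h2 : 0 ≤ mu ((m:ℤ)+1-s) := hnn _ hb1 hb2
      have h3 : mu ((m:ℤ)+1-s) ≤ mu 1 := by
        rcases eq_or_lt_of_le hb1 with hh | hh
        · rw [← hh]
        · exact hmono 1 ((m:ℤ)+1-s) le_rfl (by omega) hb2
      simp only [Dz, if_neg (by omega : s ≠ m + 1)]
      omega
    · rw [he2, hDtop]
  · -- s' ≤ m, both real
    have hs'ne : s' ≠ m + 1 := by omega
    have hsne : s ≠ m + 1 := by omega
    simp only [Dz, if_neg hs'ne, if_neg hsne]
    have : mu ((m:ℤ)+1-s) ≤ mu ((m:ℤ)+1-s') := by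
      rcases Nat.eq_or_lt_of_le hss' with he3 | hl3
    -- s = s' possible
      · rw [he3]
      · apply hmono ((m:ℤ)+1-s') ((m:ℤ)+1-s) (by push_cast; omega) (by push_cast; omega)
          (by push_cast; omega)
    omega

lemma hDbounds (hm : 0 < m) (hmu : IsRectPartition m k mu) :
    ∀ s : ℕ, 1 ≤ s → s ≤ m + 1 → 0 ≤ Dz m k mu s ∧ Dz m k mu s ≤ k := by
  obtain ⟨hmono, hnn, hk1⟩ := hmu
  intro s h1 hsm
  rcases Nat.eq_or_lt_of_le hsm with he | hl
  · rw [he]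
    have hDtop : Dz m k mu (m+1) = 0 := by simp [Dz]
    rw [hDtop]
    omega
  · simp only [Dz, if_neg (by omega : s ≠ m + 1)]
    have hb1 : 1 ≤ (m:ℤ) + 1 - s := by push_cast; omega
    have hb2 : (m:ℤ) + 1 - s ≤ m := by push_cast; omega
    have h2 : 0 ≤ mu ((m:ℤ)+1-s) := hnn _ hb1 hb2
    have h3 : mu ((m:ℤ)+1-s) ≤ mu 1 := by
      rcases eq_or_lt_of_le hb1 with hh | hh
      · rw [← hh]
      · exact hmono 1 ((m:ℤ)+1-s) le_rfl (by omega) hb2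
    omega

/-- The main integer identity: `|J| = m + c(θ)` at the level of interval sums. -/
lemma sum_identity (hm : 0 < m) (hk : 0 < k)
    (hlam : IsRectPartition m k lam) (hmu : IsRectPartition m k mu)
    (hsub : ∀ i : ℤ, 1 ≤ i → i ≤ (m : ℤ) → lam i ≤ dualPart m k mu i) :
    ∑ t ∈ Finset.range m, (Rz k lam (t+1) - max (Lz m mu (t+1) - 1) (Rz k lam t))
      = m + ∑ t ∈ Finset.range m, (Dz m k mu (t+1) - max (lam ((t:ℤ)+1)) (Dz m k mu (t+2))) := by
  obtain ⟨hlam_mono, hlam_nn, hlam_k⟩ := hlam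
  obtain ⟨hmu_mono, hmu_nn, hmu_k⟩ := hmu
  set Lam : ℕ → ℤ := fun t => if t = 0 then (k:ℤ) else lam t with hLam
  set G : ℕ → ℤ := fun t => max (Lam t) (Dz m k mu (t+1)) - Lam t with hG
  have key : ∀ t ∈ Finset.range m,
      Rz k lam (t+1) - max (Lz m mu (t+1) - 1) (Rz k lam t)
        = (1 + (Dz m k mu (t+1) - max (lam ((t:ℤ)+1)) (Dz m k mu (t+2)))) + (G (t+1) - G t) := by
    intro t ht
    rw [Finset.mem_range] at ht
    have e1 : (m:ℤ) + 1 - ((t+1:ℕ):ℤ) = (m:ℤ) - t := by push_cast; ring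
    have eD : Dz m k mu (t+1) = (k:ℤ) - mu ((m:ℤ) - t) := by
      simp only [Dz, if_neg (by omega : t + 1 ≠ m + 1), e1]
    have eL : Lz m mu (t+1) = ((t:ℤ)+1) + mu ((m:ℤ) - t) := by
      simp only [Lz, e1]; push_cast; ring
    have eR1 : Rz k lam (t+1) = (k:ℤ) + ((t:ℤ)+1) - lam ((t:ℤ)+1) := by
      simp only [Rz, if_neg (by omega : t + 1 ≠ 0)]; push_cast; ring
    have eRt : Rz k lam t = (k:ℤ) + t - Lam t - (if t = 0 then (0:ℤ) else 0) := by
      rcases Nat.eq_zero_or_pos t with rfl | hpos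
      · simp [Rz, Lam]
      · simp only [Rz, if_neg (by omega : t ≠ 0), hLam, if_neg (by omega : t ≠ 0)]
        ring
    have eG1 : G (t+1) = max (lam ((t:ℤ)+1)) (Dz m k mu (t+2)) - lam ((t:ℤ)+1) := by
      simp only [hG, hLam, if_neg (by omega : t + 1 ≠ 0)]
      push_cast; ring_nf
    have eGt : G t = max (Lam t) (Dz m k mu (t+1)) - Lam t := rfl
    rw [eG1, eGt, eR1, eRt, eL, eD]
    omega
  rw [Finset.sum_congr rfl key, Finset.sum_add_distrib, Finset.sum_add_distrib,
    Finset.sum_range_sub G, Finset.sum_const, Finset.card_range]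
  have hG0 : G 0 = 0 := by
    have hD1 : Dz m k mu (0+1) ≤ (k:ℤ) :=
      (hDbounds m k mu hm ⟨hmu_mono, hmu_nn, hmu_k⟩ 1 le_rfl (by omega)).2
    have hL0 : Lam 0 = (k:ℤ) := by simp [hLam]
    simp only [hG, hL0]
    omega
  have hGm : G m = 0 := by
    have hD : Dz m k mu (m+1) = 0 := by simp [Dz]
    have hlm : 0 ≤ lam (m:ℤ) := hlam_nn m (by exact_mod_cast hm) le_rfl
    simp only [hG, hLam, if_neg (by omega : m ≠ 0), hD]
    omega
  rw [hG0, hGm]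
  push_cast
  ring

lemma hRstrict' (hlam : IsRectPartition m k lam) :
    ∀ t : ℕ, t < m → Rz k lam t < Rz k lam (t+1) := by
  obtain ⟨hlam_mono, hlam_nn, hlam_k⟩ := hlam
  intro t ht
  rcases Nat.eq_zero_or_pos t with rfl | htpos
  · have h1 : lam ((0:ℕ)+1:ℕ) ≤ lam 1 := le_of_eq (by norm_num)
    simp only [Rz, if_pos rfl, if_neg (by omega : 0 + 1 ≠ 0)]
    push_cast at h1 ⊢
    omega
  · have h1 : lam ((t:ℤ)+1) ≤ lam t :=
      hlam_mono t ((t:ℤ)+1) (by push_cast; omega) (by omega) (by push_cast; omega)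
    simp only [Rz, if_neg (by omega : t ≠ 0), if_neg (by omega : t + 1 ≠ 0)]
    push_cast
    omega

lemma hLz_le_Rz (hlam : IsRectPartition m k lam)
    (hsub : ∀ i : ℤ, 1 ≤ i → i ≤ (m : ℤ) → lam i ≤ dualPart m k mu i) :
    ∀ t : ℕ, t < m → Lz m mu (t+1) ≤ Rz k lam (t+1) := by
  intro t ht
  have hd := hsub ((t:ℤ)+1) (by omega) (by push_cast; omega)
  simp only [dualPart] at hd
  have e2 : (m:ℤ) + 1 - ((t:ℤ)+1) = (m:ℤ) - t := by ring
  rw [e2] at hd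
  have e1 : (m:ℤ) + 1 - ((t+1:ℕ):ℤ) = (m:ℤ) - t := by push_cast; ring
  simp only [Lz, e1, Rz, if_neg (by omega : t + 1 ≠ 0)]
  push_cast
  omega

/-- Any element of `J` lies in one of the (disjoint) blocks. -/
lemma Jpred_block (hlam : IsRectPartition m k lam) (hmu : IsRectPartition m k mu)
    (j0 : ℤ) (h1 : 1 ≤ j0) (hJ : Jpred m k lam mu j0) :
    ∃ t : ℕ, t < m ∧ max (Lz m mu (t+1) - 1) (Rz k lam t) < j0 ∧ j0 ≤ Rz k lam (t+1) := by
  classical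
  obtain ⟨t, htm, hL, hR⟩ := hJ
  rw [Finset.mem_range] at htm
  have hQex : ∃ s : ℕ, j0 ≤ Rz k lam (s+1) := ⟨t, hR⟩
  have htsspec : j0 ≤ Rz k lam (Nat.find hQex + 1) := Nat.find_spec hQex
  have htst : Nat.find hQex ≤ t := Nat.find_min' hQex hR
  have htsm : Nat.find hQex < m := Nat.lt_of_le_of_lt htst htm
  refine ⟨Nat.find hQex, htsm, ?_, htsspec⟩
  have hLb : Lz m mu (Nat.find hQex + 1) ≤ j0 :=
    calc Lz m mu (Nat.find hQex + 1) ≤ Lz m mu (t+1) :=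
          hLmono m k mu hmu (Nat.find hQex + 1) (t+1)
            (Nat.le_add_left 1 _) (Nat.succ_le_succ htst) htm
      _ ≤ _ := hL
  have hRb : Rz k lam (Nat.find hQex) < j0 := by
    rcases Nat.eq_zero_or_pos (Nat.find hQex) with he | hpos
    · rw [he]
      have hR0 : Rz k lam 0 = 0 := by simp [Rz]
      omega
    · have hmin := Nat.find_min hQex (show Nat.find hQex - 1 < Nat.find hQex by omega)
      push_neg at hmin
      rw [show Nat.find hQex - 1 + 1 = Nat.find hQex from by omega] at hmin
      exact hmin
  omega

/-- The index set `J` inside `Fin (m+k)`. -/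
noncomputable def JFin (m k : ℕ) (lam mu : ℤ → ℤ) : Finset (Fin (m+k)) :=
  @Finset.filter _ (fun j => Jpred m k lam mu (((j : ℕ) : ℤ)+1)) (Classical.decPred _)
    Finset.univ

lemma mem_JFin {j : Fin (m+k)} :
    j ∈ JFin m k lam mu ↔ Jpred m k lam mu (((j : ℕ) : ℤ)+1) := by
  simp [JFin]

lemma cardJ (hm : 0 < m) (hlam : IsRectPartition m k lam) (hmu : IsRectPartition m k mu) :
    (JFin m k lam mu).card
      = ∑ t ∈ Finset.range m,
          (Rz k lam (t+1) - max (Lz m mu (t+1) - 1) (Rz k lam t)).toNat := by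
  classical
  obtain ⟨hlam_mono, hlam_nn, hlam_k⟩ := hlam
  obtain ⟨hmu_mono, hmu_nn, hmu_k⟩ := hmu
  have hRb : ∀ t : ℕ, t < m → (t:ℤ) + 1 ≤ Rz k lam (t+1) ∧ Rz k lam (t+1) ≤ (k:ℤ) + t + 1 := by
    intro t ht
    have h1 : lam (t+1 : ℕ) ≤ lam 1 := hlam_mono 1 (t+1 : ℕ) le_rfl (by push_cast; omega)
      (by push_cast; omega)
    have h2 : 0 ≤ lam (t+1 : ℕ) := hlam_nn (t+1 : ℕ) (by push_cast; omega) (by push_cast; omega)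
    simp only [Rz, if_neg (by omega : t + 1 ≠ 0)]
    push_cast at h1 h2 ⊢
    omega
  have hLb : ∀ t : ℕ, t < m → (t:ℤ) ≤ Lz m mu (t+1) - 1 := by
    intro t ht
    have e1 : (m:ℤ) + 1 - ((t+1:ℕ):ℤ) = (m:ℤ) - t := by push_cast; ring
    have h2 : 0 ≤ mu ((m:ℤ) - t) := hmu_nn _ (by omega) (by omega)
    simp only [Lz, e1]
    push_cast
    omega
  set ZJ : Finset ℤ := (Finset.range m).biUnion
    (fun t => Finset.Ioc (max (Lz m mu (t+1) - 1) (Rz k lam t)) (Rz k lam (t+1))) with hZJ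
  have hcard : (JFin m k lam mu).card = ZJ.card := by
    apply Finset.card_bij (fun (j : Fin (m+k)) _ => ((j : ℕ) : ℤ) + 1)
    · intro a ha
      rw [mem_JFin] at ha
      obtain ⟨t, htm, hIoc1, hIoc2⟩ := Jpred_block m k lam mu ⟨hlam_mono, hlam_nn, hlam_k⟩
        ⟨hmu_mono, hmu_nn, hmu_k⟩ (((a : ℕ) : ℤ)+1) (by omega) ha
      rw [hZJ, Finset.mem_biUnion]
      exact ⟨t, Finset.mem_range.mpr htm, Finset.mem_Ioc.mpr ⟨hIoc1, hIoc2⟩⟩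
    · intro a _ b _ hab
      have : (a : ℕ) = (b : ℕ) := by omega
      exact Fin.ext this
    · intro b hb
      rw [hZJ, Finset.mem_biUnion] at hb
      obtain ⟨t, htm, hIoc⟩ := hb
      rw [Finset.mem_range] at htm
      rw [Finset.mem_Ioc] at hIoc
      have hb1 : (t:ℤ) + 1 ≤ b := by
        have := hLb t htm
        omega
      have hb2 : b ≤ (m:ℤ) + k := by
        have := (hRb t htm).2
        omega
      refine ⟨⟨(b-1).toNat, by omega⟩, ?_, by simp; omega⟩
      rw [mem_JFin]
      refine ⟨t, Finset.mem_range.mpr htm, ?_, ?_⟩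
      · simp only [Fin.val_mk]
        push_cast
        omega
      · simp only [Fin.val_mk]
        push_cast
        omega
  rw [hcard, hZJ]
  rw [Finset.card_biUnion]
  · apply Finset.sum_congr rfl
    intro t _
    rw [Int.card_Ioc]
  · intro t ht t' ht' hne
    rw [Finset.mem_coe, Finset.mem_range] at ht ht'
    have key : ∀ a b : ℕ, a < b → b < m → Disjoint
        (Finset.Ioc (max (Lz m mu (a+1) - 1) (Rz k lam a)) (Rz k lam (a+1)))
        (Finset.Ioc (max (Lz m mu (b+1) - 1) (Rz k lam b)) (Rz k lam (b+1))) := by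
      intro a b hab hbm
      rw [Finset.disjoint_left]
      intro x hx1 hx2
      rw [Finset.mem_Ioc] at hx1 hx2
      have hmono := hRmono m k lam ⟨hlam_mono, hlam_nn, hlam_k⟩ (a+1) b hab (by omega)
      omega
    rcases Nat.lt_or_ge t t' with h | h
    · exact key t t' h ht'
    · have h' : t' < t := by omega
      exact (key t' t h' ht).symm

lemma dualPart_eq_Dz (i : ℕ) (hi1 : 1 ≤ i) (him : i ≤ m) :
    dualPart m k mu (i : ℤ) = Dz m k mu i := by
  simp only [dualPart, Dz, if_neg (by omega : i ≠ m + 1)]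

lemma image_snd_eq (hm : 0 < m)
    (hlam : IsRectPartition m k lam) (hmu : IsRectPartition m k mu)
    (hsub : ∀ i : ℤ, 1 ≤ i → i ≤ (m : ℤ) → lam i ≤ dualPart m k mu i) :
    (youngD m k (dualPart m k mu) \ youngD m k lam).image Prod.snd
      = (Finset.range m).biUnion
          (fun t => Finset.Ioc (max (lam ((t:ℤ)+1)) (Dz m k mu (t+2))) (Dz m k mu (t+1))) := by
  classical
  obtain ⟨hlam_mono, hlam_nn, hlam_k⟩ := hlam
  obtain ⟨hmu_mono, hmu_nn, hmu_k⟩ := hmu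
  have hDtop : Dz m k mu (m+1) = 0 := by simp [Dz]
  ext c
  simp only [Finset.mem_image, Finset.mem_biUnion, Finset.mem_range, Finset.mem_Ioc]
  constructor
  · rintro ⟨⟨r, c'⟩, hb, rfl⟩
    rw [Finset.mem_sdiff] at hb
    obtain ⟨hbin, hbout⟩ := hb
    simp only [youngD, Finset.mem_filter, Finset.mem_product, Finset.mem_Icc] at hbin hbout
    obtain ⟨⟨⟨hr1, hrm⟩, hc1, hck⟩, hcD⟩ := hbin
    have hlr : lam r < c' := by
      by_contra hcon
      push_neg at hcon
      exact hbout ⟨⟨⟨hr1, hrm⟩, hc1, hck⟩, hcon⟩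
    -- r = i0 + 1
    have hi0 : ∃ i0 : ℕ, ((i0 : ℤ) + 1 = r) ∧ i0 < m := by
      refine ⟨(r-1).toNat, by omega, by omega⟩
    obtain ⟨i0, hi0r, hi0m⟩ := hi0
    have hcD' : c' ≤ Dz m k mu (i0+1) := by
      rw [← dualPart_eq_Dz m k mu (i0+1) (by omega) (by omega)]
      have : ((i0+1 : ℕ) : ℤ) = r := by push_cast; omega
      rw [this]
      exact hcD
    have hQex : ∃ i : ℕ, Dz m k mu (i+2) < c' := by
      refine ⟨m - 1, ?_⟩
      rw [show m - 1 + 2 = m + 1 from by omega, hDtop]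
      omega
    have hspec : Dz m k mu (Nat.find hQex + 2) < c' := Nat.find_spec hQex
    have hfla : Nat.find hQex ≤ m - 1 := Nat.find_min' hQex (by
      rw [show m - 1 + 2 = m + 1 from by omega, hDtop]; omega)
    have hflm : Nat.find hQex < m := by omega
    refine ⟨Nat.find hQex, hflm, ?_, ?_⟩
    · -- max (lam (t+1)) (Dz (t+2)) < c'
      rw [max_lt_iff]
      refine ⟨?_, hspec⟩
      by_contra hcon
      push_neg at hcon
      -- then i*+1 < r, so Dz(i0+1) ≤ Dz(i*+2) < c' ≤ Dz(i0+1), contradiction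
      have hlt : (Nat.find hQex : ℤ) + 1 < r := by
        by_contra hge
        push_neg at hge
        have : lam ((Nat.find hQex : ℤ)+1) ≤ lam r :=
          hlam_mono r ((Nat.find hQex : ℤ)+1) hr1 hge (by push_cast; omega)
        omega
      have hmon := hDmono m k mu ⟨hmu_mono, hmu_nn, hmu_k⟩ (Nat.find hQex + 2) (i0+1)
        (by omega) (by omega) (by omega)
      omega
    · -- c' ≤ Dz (t+1)
      rcases Nat.eq_zero_or_pos (Nat.find hQex) with he | hpos
      · rw [he]
        have hmon := hDmono m k mu ⟨hmu_mono, hmu_nn, hmu_k⟩ (0+1) (i0+1)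
          le_rfl (by omega) (by omega)
        omega
      · have hmin := Nat.find_min hQex (show Nat.find hQex - 1 < Nat.find hQex by omega)
        push_neg at hmin
        rw [show Nat.find hQex - 1 + 2 = Nat.find hQex + 1 from by omega] at hmin
        exact hmin
  · rintro ⟨t, htm, hmax, hD⟩
    rw [max_lt_iff] at hmax
    obtain ⟨hl, hd2⟩ := hmax
    have hln : 0 ≤ lam ((t:ℤ)+1) := hlam_nn _ (by omega) (by push_cast; omega)
    have hDk : Dz m k mu (t+1) ≤ (k:ℤ) :=
      (hDbounds m k mu hm ⟨hmu_mono, hmu_nn, hmu_k⟩ (t+1) (by omega) (by omega)).2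
    refine ⟨((t:ℤ)+1, c), ?_, rfl⟩
    rw [Finset.mem_sdiff]
    constructor
    · simp only [youngD, Finset.mem_filter, Finset.mem_product, Finset.mem_Icc]
      refine ⟨⟨⟨by omega, by push_cast; omega⟩, by omega, by omega⟩, ?_⟩
      rw [show ((t:ℤ)+1) = ((t+1:ℕ):ℤ) from by push_cast; ring,
        dualPart_eq_Dz m k mu (t+1) (by omega) (by omega)]
      exact hD
    · simp only [youngD, Finset.mem_filter, Finset.mem_product, Finset.mem_Icc]
      rintro ⟨-, hcon⟩
      omega

lemma cardC (hm : 0 < m)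
    (hlam : IsRectPartition m k lam) (hmu : IsRectPartition m k mu)
    (hsub : ∀ i : ℤ, 1 ≤ i → i ≤ (m : ℤ) → lam i ≤ dualPart m k mu i) :
    colCount (youngD m k (dualPart m k mu) \ youngD m k lam)
      = ∑ t ∈ Finset.range m,
          (Dz m k mu (t+1) - max (lam ((t:ℤ)+1)) (Dz m k mu (t+2))).toNat := by
  classical
  rw [colCount, image_snd_eq m k lam mu hm hlam hmu hsub]
  rw [Finset.card_biUnion]
  · apply Finset.sum_congr rfl
    intro t _
    rw [Int.card_Ioc]
  · intro t ht t' ht' hne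
    rw [Finset.mem_coe, Finset.mem_range] at ht ht'
    have key : ∀ a b : ℕ, a < b → b < m → Disjoint
        (Finset.Ioc (max (lam ((a:ℤ)+1)) (Dz m k mu (a+2))) (Dz m k mu (a+1)))
        (Finset.Ioc (max (lam ((b:ℤ)+1)) (Dz m k mu (b+2))) (Dz m k mu (b+1))) := by
      intro a b hab hbm
      rw [Finset.disjoint_left]
      intro x hx1 hx2
      rw [Finset.mem_Ioc] at hx1 hx2
      have hmono := hDmono m k mu hmu (a+2) (b+1) (by omega) (by omega) (by omega)
      omega
    rcases Nat.lt_or_ge t t' with h | h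
    · exact key t t' h ht'
    · exact (key t' t (by omega) ht).symm

end Main

theorem union_richardson_is_subspace (m k : ℕ) (hm : 0 < m) (hk : 0 < k)
    (lam mu : ℤ → ℤ) (hlam : IsRectPartition m k lam) (hmu : IsRectPartition m k mu)
    (hsub : ∀ i : ℤ, 1 ≤ i → i ≤ (m : ℤ) → lam i ≤ dualPart m k mu i) :
    ∃ W : Submodule ℂ (Fin (m + k) → ℂ),
      (W : Set (Fin (m + k) → ℂ)) =
        {u | ∃ V : Submodule ℂ (Fin (m + k) → ℂ), InRichardson m k lam mu V ∧ u ∈ V} ∧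
      Module.finrank ℂ ↥W =
        m + colCount (youngD m k (dualPart m k mu) \ youngD m k lam) := by
  classical
  refine ⟨suppSub (m+k) {j | Jpred m k lam mu (((j : ℕ) : ℤ)+1)}, ?_, ?_⟩
  · ext u
    simp only [SetLike.mem_coe, Set.mem_setOf_eq]
    constructor
    · intro hu
      exact mem_union_of_mem_W m k lam mu hm hlam hmu hsub u hu
    · rintro ⟨V, hV, huV⟩
      exact richardson_le m k lam mu hm hlam hmu V hV huV
  · have hset : {j : Fin (m+k) | Jpred m k lam mu (((j : ℕ) : ℤ)+1)}
        = (↑(JFin m k lam mu) : Set (Fin (m+k))) := by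
      ext j
      simp [mem_JFin]
    rw [hset, finrank_suppSub]
    have hterm1 : ∀ t ∈ Finset.range m,
        0 ≤ Rz k lam (t+1) - max (Lz m mu (t+1) - 1) (Rz k lam t) := by
      intro t ht
      rw [Finset.mem_range] at ht
      have h1 := hLz_le_Rz m k lam mu hlam hsub t ht
      have h2 := hRstrict' m k lam hlam t ht
      omega
    have hterm2 : ∀ t ∈ Finset.range m,
        0 ≤ Dz m k mu (t+1) - max (lam ((t:ℤ)+1)) (Dz m k mu (t+2)) := by
      intro t ht
      rw [Finset.mem_range] at ht
      have h1 : lam ((t:ℤ)+1) ≤ Dz m k mu (t+1) := by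
        rw [← dualPart_eq_Dz m k mu (t+1) (by omega) (by omega)]
        have e : ((t+1:ℕ):ℤ) = (t:ℤ)+1 := by push_cast; ring
        rw [e]
        exact hsub ((t:ℤ)+1) (by omega) (by push_cast; omega)
      have h2 := hDmono m k mu hmu (t+1) (t+2) (by omega) (by omega) (by omega)
      omega
    have hZ : ((JFin m k lam mu).card : ℤ)
        = (m : ℤ) + (colCount (youngD m k (dualPart m k mu) \ youngD m k lam) : ℤ) := by
      rw [cardJ m k lam mu hm hlam hmu, cardC m k lam mu hm hlam hmu hsub]
      push_cast
      rw [Finset.sum_congr rfl (fun t ht => Int.toNat_of_nonneg (hterm1 t ht)),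
        Finset.sum_congr rfl (fun t ht => Int.toNat_of_nonneg (hterm2 t ht))]
      exact sum_identity m k lam mu hm hk hlam hmu hsub
    exact_mod_cast hZ
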